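/- arXiv:1601.00843 — 4 statements merged into one kernel-verified Lean document; each statement's English description precedes it below -/
import Mathlib

section
/- Suppose x_ref > 0, α_on > 0, β > 0 with β > 2·x_ref·α_on, and define x_border = β/α_on + (x_ref − β/α_on)·e^{α_on}. If additionally β < (e^{α_on}/(e^{α_on}−1))·x_ref·α_on, then 0 < x_border < x_ref. -/
theorem xborder_in_interval (x_ref α_on β : ℝ)
    (hx : 0 < x_ref) (hα : 0 < α_on) (hβ : 0 < β)
    (hβ1 : 2 * x_ref * α_on < β)
    (hβ2 : β < (Real.exp α_on / (Real.exp α_on - 1)) * x_ref * α_on) :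
    0 < β / α_on + (x_ref - β / α_on) * Real.exp α_on ∧
      β / α_on + (x_ref - β / α_on) * Real.exp α_on < x_ref := by
  set E := Real.exp α_on with hEdef
  have hE : 1 < E := by
    rw [hEdef]
    exact Real.one_lt_exp_iff.mpr hα
  have hE1 : 0 < E - 1 := by linarith
  have h2 : β * (E - 1) < E * x_ref * α_on := by
    rw [div_mul_eq_mul_div, div_mul_eq_mul_div, lt_div_iff₀ hE1] at hβ2
    linarith
  have heq : β / α_on + (x_ref - β / α_on) * E = (β + (x_ref * α_on - β) * E) / α_on := by
    field_simp

  rw [heq]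
  constructor
  · apply div_pos _ hα
    nlinarith
  · rw [div_lt_iff₀ hα]
    nlinarith
end

section
/- Under Assumption 2.1 (x_ref > 0, 0 < α_on < log 2, 2·x_ref·α_on < β < (e^{α_on}/(e^{α_on}−1))·x_ref·α_on, and α_on < α_off < ((β/α_on − x_ref)/x_ref)·α_on), the map f : [0, x_ref] → [0, x_ref] defined piecewise by f(x) = β/α_on + (x − β/α_on)·e^{−α_on} for 0 ≤ x ≤ x_border and f(x) = x_ref·e^{−α_off}·((β/α_on − x)/(β/α_on − x_ref))^{α_off/α_on} for x_border < x ≤ x_ref, where x_border = β/α_on + (x_ref − β/α_on)·e^{α_on}, maps [0, x_ref] into [0, x_ref]. -/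
/-- The border point `x_border`. -/
noncomputable def xBorder (α_on β x_ref : ℝ) : ℝ :=
  β / α_on + (x_ref - β / α_on) * Real.exp α_on

/-- The stroboscopic (period-1) map of the deterministic switching buck converter. -/
noncomputable def strobo (α_on α_off β x_ref : ℝ) (x : ℝ) : ℝ :=
  if x ≤ xBorder α_on β x_ref then
    β / α_on + (x - β / α_on) * Real.exp (-α_on)
  else
    x_ref * Real.exp (-α_off) *
      ((β / α_on - x) / (β / α_on - x_ref)) ^ (α_off / α_on)

theorem strobo_mapsTo (x_ref α_on α_off β : ℝ)
    (hx : 0 < x_ref) (hα : 0 < α_on) (hα2 : α_on < Real.log 2)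
    (hβ1 : 2 * x_ref * α_on < β)
    (hβ2 : β < (Real.exp α_on / (Real.exp α_on - 1)) * x_ref * α_on)
    (hoff1 : α_on < α_off)
    (hoff2 : α_off < ((β / α_on - x_ref) / x_ref) * α_on) :
    Set.MapsTo (strobo α_on α_off β x_ref) (Set.Icc 0 x_ref) (Set.Icc 0 x_ref) := by
  intro x hxmem
  obtain ⟨hx0, hx1⟩ := hxmem
  set c := β / α_on with hc_def
  have hc : 2 * x_ref < c := by
    rw [hc_def, lt_div_iff₀ hα]; linarith
  have hcx : x_ref < c := by linarith
  have hE : (0:ℝ) < Real.exp (-α_on) := Real.exp_pos _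
  have hE1 : Real.exp (-α_on) < 1 := by
    rw [Real.exp_lt_one_iff]; linarith
  have hEE : Real.exp α_on * Real.exp (-α_on) = 1 := by
    rw [← Real.exp_add]; simp
  unfold strobo
  split_ifs with h
  · -- linear branch
    constructor
    · have h1 : 0 ≤ x * Real.exp (-α_on) := mul_nonneg hx0 hE.le
      have h2 : 0 ≤ c * (1 - Real.exp (-α_on)) := by
        apply mul_nonneg <;> nlinarith
      nlinarith
    · rw [xBorder, ← hc_def] at h
      have h3 := mul_le_mul_of_nonneg_right h hE.le
      nlinarith
  · -- rpow branch
    push_neg at h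
    rw [xBorder, ← hc_def] at h
    have hd : 0 < c - x_ref := by linarith
    have hA : (1:ℝ) < Real.exp α_on := by
      nlinarith [Real.add_one_lt_exp hα.ne']
    have hb0 : 0 ≤ (c - x) / (c - x_ref) := by
      apply div_nonneg _ hd.le; linarith
    have hp0 : 0 ≤ α_off / α_on := div_nonneg (by linarith) hα.le
    constructor
    · exact mul_nonneg (mul_nonneg hx.le (Real.exp_pos _).le) (Real.rpow_nonneg hb0 _)
    · have hble : (c - x) / (c - x_ref) ≤ Real.exp α_on := by
        rw [div_le_iff₀ hd]; nlinarith
      have hrle : ((c - x) / (c - x_ref)) ^ (α_off / α_on) ≤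
          (Real.exp α_on) ^ (α_off / α_on) :=
        Real.rpow_le_rpow hb0 hble hp0
      have heq : (Real.exp α_on) ^ (α_off / α_on) = Real.exp α_off := by
        rw [← Real.exp_mul]
        congr 1
        field_simp
      rw [heq] at hrle
      calc x_ref * Real.exp (-α_off) * ((c - x) / (c - x_ref)) ^ (α_off / α_on)
          ≤ x_ref * Real.exp (-α_off) * Real.exp α_off := by
            apply mul_le_mul_of_nonneg_left hrle
            positivity
        _ = x_ref := by rw [mul_assoc, ← Real.exp_add]; simp
end

section
/- Under Assumption 2.1, the stroboscopic map f has a unique fixed point x*, and it lies in the open interval (x_border, x_ref). -/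
theorem strobo_unique_fixed_point (x_ref α_on α_off β : ℝ)
    (hx : 0 < x_ref) (hα : 0 < α_on) (hα2 : α_on < Real.log 2)
    (hβ1 : 2 * x_ref * α_on < β)
    (hβ2 : β < (Real.exp α_on / (Real.exp α_on - 1)) * x_ref * α_on)
    (hoff1 : α_on < α_off)
    (hoff2 : α_off < ((β / α_on - x_ref) / x_ref) * α_on) :
    ∃ xstar : ℝ,
      (xstar ∈ Set.Ioo (xBorder α_on β x_ref) x_ref ∧
        strobo α_on α_off β x_ref xstar = xstar) ∧
      ∀ y ∈ Set.Icc 0 x_ref, strobo α_on α_off β x_ref y = y → y = xstar := by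
  set b := β / α_on with hbdef
  set E := Real.exp α_on with hEdef
  have hEpos : 0 < E := Real.exp_pos α_on
  have hE1 : 1 < E := by
    have := Real.add_one_le_exp α_on; simp only [← hEdef] at this; linarith
  have hoffpos : 0 < α_off := lt_trans hα hoff1
  have hppos : 0 < α_off / α_on := div_pos hoffpos hα
  have hbx : x_ref < b := by
    have h2 : 2 * x_ref < b := by
      rw [hbdef, lt_div_iff₀ hα]; exact hβ1
    linarith
  have hbxne : b - x_ref ≠ 0 := ne_of_gt (by linarith)
  set xb := xBorder α_on β x_ref with hxbdef
  have hxbval : xb = b + (x_ref - b) * E := rfl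
  have hxb_lt : xb < x_ref := by
    rw [hxbval]; nlinarith
  have hxb_pos : 0 < xb := by
    have hb2 : b < E / (E - 1) * x_ref := by
      rw [hbdef, div_lt_iff₀ hα]
      calc β < Real.exp α_on / (Real.exp α_on - 1) * x_ref * α_on := hβ2
        _ = E / (E - 1) * x_ref * α_on := rfl
    have hE1' : 0 < E - 1 := by linarith
    have hb3 : b * (E - 1) < E * x_ref := by
      rw [div_mul_eq_mul_div, lt_div_iff₀ hE1'] at hb2
      linarith
    rw [hxbval]; nlinarith
  -- the second-branch map
  set G : ℝ → ℝ := fun x => x_ref * Real.exp (-α_off) * ((b - x) / (b - x_ref)) ^ (α_off / α_on)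
    with hGdef
  have hbase_pos : ∀ x ≤ x_ref, 0 < (b - x) / (b - x_ref) := by
    intro x hxle
    apply div_pos (by linarith) (by linarith)
  -- G at the border equals x_ref
  have hGxb : G xb = x_ref := by
    have hratio : (b - xb) / (b - x_ref) = E := by
      rw [hxbval]; field_simp; ring
    have hrpow : E ^ (α_off / α_on) = Real.exp α_off := by
      rw [hEdef, Real.rpow_def_of_pos (Real.exp_pos _), Real.log_exp,
        mul_comm, div_mul_cancel₀ _ (ne_of_gt hα)]
    simp only [hGdef]
    rw [hratio, hrpow, mul_assoc, ← Real.exp_add, neg_add_cancel, Real.exp_zero, mul_one]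
  -- G at x_ref
  have hGxr : G x_ref = x_ref * Real.exp (-α_off) := by
    simp only [hGdef, div_self hbxne, Real.one_rpow, mul_one]
  have hGxr_lt : G x_ref < x_ref := by
    rw [hGxr]
    nlinarith [Real.exp_lt_one_iff.mpr (neg_neg_iff_pos.mpr hoffpos) ]
  -- G is strictly antitone on [xb, x_ref]
  have hanti : StrictAntiOn G (Set.Icc xb x_ref) := by
    intro u hu v hv huv
    have h1 : (b - v) / (b - x_ref) < (b - u) / (b - x_ref) := by
      gcongr <;> linarith [hu.2, hv.2]
    have h2 : ((b - v) / (b - x_ref)) ^ (α_off / α_on) <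
        ((b - u) / (b - x_ref)) ^ (α_off / α_on) :=
      Real.rpow_lt_rpow (le_of_lt (hbase_pos v hv.2)) h1 hppos
    have hc : 0 < x_ref * Real.exp (-α_off) := mul_pos hx (Real.exp_pos _)
    simp only [hGdef]
    exact mul_lt_mul_of_pos_left h2 hc
  -- continuity of G - id on the interval
  have hcont : ContinuousOn (fun x => G x - x) (Set.Icc xb x_ref) := by
    apply ContinuousOn.sub ?_ continuousOn_id
    apply ContinuousOn.mul continuousOn_const
    apply ContinuousOn.rpow_const
    · exact ((continuous_const.sub continuous_id).div_const _).continuousOn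
    · intro x _; right; exact le_of_lt hppos
  -- IVT
  have hmem : (0 : ℝ) ∈ Set.Ioo ((fun x => G x - x) x_ref) ((fun x => G x - x) xb) := by
    constructor
    · simp only; linarith
    · simp only [hGxb]; linarith
  obtain ⟨xstar, hxstar_mem, hxstar_eq⟩ :=
    intermediate_value_Ioo' (le_of_lt hxb_lt) hcont hmem
  have hfix : G xstar = xstar := by
    have := hxstar_eq; simp only at this; linarith
  refine ⟨xstar, ⟨⟨hxstar_mem.1, hxstar_mem.2⟩, ?_⟩, ?_⟩
  · rw [strobo, if_neg (not_le.mpr hxstar_mem.1)]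
    exact hfix
  · intro y hy hyfix
    by_cases hcase : y ≤ xb
    · exfalso
      rw [strobo, if_pos hcase] at hyfix
      have he : Real.exp (-α_on) < 1 := Real.exp_lt_one_iff.mpr (by linarith)
      have hepos : 0 < Real.exp (-α_on) := Real.exp_pos _
      have hby : 0 < b - y := by linarith
      nlinarith
    · push_neg at hcase
      rw [strobo, if_neg (not_le.mpr hcase)] at hyfix
      have hyfix' : G y = y := hyfix
      have hyIcc : y ∈ Set.Icc xb x_ref := ⟨le_of_lt hcase, hy.2⟩
      have hsIcc : xstar ∈ Set.Icc xb x_ref :=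
        ⟨le_of_lt hxstar_mem.1, le_of_lt hxstar_mem.2⟩
      rcases lt_trichotomy y xstar with h | h | h
      · have := hanti hyIcc hsIcc h
        rw [hyfix', hfix] at this; linarith
      · exact h
      · have := hanti hsIcc hyIcc h
        rw [hyfix', hfix] at this; linarith
end

section
/- Under Assumption 2.1, for every x ∈ (x_border, x_ref) the derivative of f satisfies |f′(x)| = α_off·f(x)/(β − α_on·x) ≤ α_off·x_ref/(β − α_on·x_ref) < 1; in particular, the fixed point x* ∈ (x_border, x_ref) of f is a stable fixed point of the discrete dynamical system xₙ₊₁ = f(xₙ). -/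
theorem strobo_deriv_bound (x_ref α_on α_off β : ℝ)
    (hx : 0 < x_ref) (hα : 0 < α_on) (hα2 : α_on < Real.log 2)
    (hβ1 : 2 * x_ref * α_on < β)
    (hβ2 : β < (Real.exp α_on / (Real.exp α_on - 1)) * x_ref * α_on)
    (hoff1 : α_on < α_off)
    (hoff2 : α_off < ((β / α_on - x_ref) / x_ref) * α_on) :
    (∀ x ∈ Set.Ioo (xBorder α_on β x_ref) x_ref, ∃ d : ℝ,
      HasDerivAt (strobo α_on α_off β x_ref) d x ∧
      |d| = α_off * strobo α_on α_off β x_ref x / (β - α_on * x) ∧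
      |d| ≤ α_off * x_ref / (β - α_on * x_ref)) ∧
    α_off * x_ref / (β - α_on * x_ref) < 1 := by
  have hαne : α_on ≠ 0 := hα.ne'
  have hoffpos : (0:ℝ) < α_off := hα.trans hoff1
  have hc : x_ref < β / α_on := by rw [lt_div_iff₀ hα]; nlinarith
  have hcr : 0 < β / α_on - x_ref := by linarith
  have hβr : 0 < β - α_on * x_ref := by nlinarith
  have hβxr : β - α_on * x_ref = α_on * (β / α_on - x_ref) := by field_simp
  have hp1 : 1 < α_off / α_on := (one_lt_div hα).2 hoff1
  have hlast : α_off * x_ref / (β - α_on * x_ref) < 1 := by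
    rw [div_lt_one hβr]
    have h := mul_lt_mul_of_pos_right hoff2 hx
    have heq : (β / α_on - x_ref) / x_ref * α_on * x_ref = β - α_on * x_ref := by
      field_simp
    linarith [heq ▸ h]
  refine ⟨fun x hxm => ?_, hlast⟩
  obtain ⟨hxb, hxr⟩ := hxm
  have hcx : 0 < β / α_on - x := by linarith
  set p := α_off / α_on with hpdef
  set g : ℝ := (β / α_on - x) / (β / α_on - x_ref) with hgdef
  have hgpos : 0 < g := div_pos hcx hcr
  have hpα : α_off = p * α_on := by rw [hpdef]; field_simp
  have hβxx : β - α_on * x = α_on * (g * (β / α_on - x_ref)) := by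
    rw [hgdef, div_mul_cancel₀ _ hcr.ne']; field_simp
  -- inner derivative
  have hinner : HasDerivAt (fun y => (β / α_on - y) / (β / α_on - x_ref))
      (-1 / (β / α_on - x_ref)) x := by
    have h1 : HasDerivAt (fun y : ℝ => β / α_on - y) (-1) x := by
      simpa using (hasDerivAt_id x).const_sub (β / α_on)
    exact h1.div_const _
  have hrpow := hinner.rpow_const (p := p) (Or.inl hgpos.ne')
  have hF := hrpow.const_mul (x_ref * Real.exp (-α_off))
  set d : ℝ := x_ref * Real.exp (-α_off) * (-1 / (β / α_on - x_ref) * p * g ^ (p - 1))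
    with hddef
  have hev : strobo α_on α_off β x_ref
      =ᶠ[nhds x] fun y => x_ref * Real.exp (-α_off) *
        ((β / α_on - y) / (β / α_on - x_ref)) ^ p := by
    filter_upwards [Ioi_mem_nhds hxb] with y hy
    simp only [strobo, if_neg (not_le.2 (Set.mem_Ioi.1 hy))]; rfl
  have hD : HasDerivAt (strobo α_on α_off β x_ref) d x :=
    HasDerivAt.congr_of_eventuallyEq hF hev
  have hval : strobo α_on α_off β x_ref x = x_ref * Real.exp (-α_off) * g ^ p := by
    simp only [strobo, if_neg (not_le.2 hxb)]; rfl
  have hgp : g ^ (p - 1) = g ^ p / g := by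
    rw [Real.rpow_sub hgpos, Real.rpow_one]
  have hgppos : 0 < g ^ p := Real.rpow_pos_of_pos hgpos _
  have hppos : 0 < p := by positivity
  have hdle : d ≤ 0 := by
    rw [hddef]
    have h0 : -1 / (β / α_on - x_ref) * p * g ^ (p - 1)
        = -(1 / (β / α_on - x_ref) * p * g ^ (p - 1)) := by ring
    rw [h0]
    exact mul_nonpos_of_nonneg_of_nonpos (by positivity) (neg_nonpos.2 (by positivity))
  have habs : |d| = α_off * strobo α_on α_off β x_ref x / (β - α_on * x) := by
    rw [abs_of_nonpos hdle, hddef, hval, hgp, hβxx, hpα]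
    field_simp
  refine ⟨d, hD, habs, ?_⟩
  rw [habs, hval]
  -- bound
  have hgle : g ≤ Real.exp α_on := by
    have hxb' : xBorder α_on β x_ref < x := hxb
    rw [xBorder] at hxb'
    rw [hgdef, div_le_iff₀ hcr]
    nlinarith [hxb']
  have hkey : Real.exp (-α_off) * g ^ p ≤ g := by
    have h1 : g ^ (p - 1) ≤ Real.exp α_on ^ (p - 1) :=
      Real.rpow_le_rpow hgpos.le hgle (by linarith)
    have h2 : Real.exp α_on ^ (p - 1) = Real.exp (α_on * (p - 1)) :=
      (Real.exp_mul _ _).symm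
    have h3 : α_on * (p - 1) = α_off - α_on := by
      rw [hpdef]; field_simp
    have h4 : g ^ (p - 1) ≤ Real.exp α_off := by
      rw [h2, h3] at h1
      exact h1.trans (Real.exp_le_exp.2 (by linarith))
    have h5 : g ^ p = g ^ (p - 1) * g := by
      rw [hgp, div_mul_cancel₀ _ hgpos.ne']
    rw [h5]
    calc Real.exp (-α_off) * (g ^ (p - 1) * g)
        ≤ Real.exp (-α_off) * (Real.exp α_off * g) := by
          have := mul_le_mul_of_nonneg_right h4 hgpos.le
          exact mul_le_mul_of_nonneg_left this (Real.exp_pos _).le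
      _ = g := by rw [← mul_assoc, ← Real.exp_add]; simp
  have hβx : 0 < β - α_on * x := by rw [hβxx]; positivity
  rw [div_le_div_iff₀ hβx hβr, hβxx, hβxr]
  have hmul := mul_le_mul_of_nonneg_left hkey
    (show (0:ℝ) ≤ α_off * x_ref * α_on * (β / α_on - x_ref) by positivity)
  nlinarith [hmul]
end
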